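/- Let α₁, α₂, α₃, α₄, α₅, β₁, β₂, β₃, γ₁, γ₂, γ₃ be positive reals and δ₁, …, δ₈ positive reals. If Δ₁ = α₃ + α₄ + α₅ − α₁ − α₂ > 0, Δ₂ = γ₂ + γ₃ − γ₁ > 0 and Δ₃ = β₂ + β₃ − β₁ > 0, then for every x, y, z ∈ ℂ the triple series ∑_{m,j,k=0}^∞ Γ(α₁m+β₁k+δ₁) Γ(α₂m+γ₁j+δ₂) x^m y^j z^k / (Γ(α₃m+β₂k+δ₃) Γ(α₄m+δ₄) Γ(α₅m+δ₅) Γ(β₃k+δ₆) Γ(γ₂j+δ₇) Γ(γ₃j+δ₈)) converges absolutely (the triply-indexed family of terms is summable over ℕ × ℕ × ℕ). -/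

import Mathlib

open Real


lemma phi_ge_sub_one {s : ℝ} (hs : 0 < s) : s - 1 ≤ s * Real.log s := by
  have h := Real.log_le_sub_one_of_pos (inv_pos.mpr hs)
  rw [Real.log_inv] at h
  have h2 := mul_le_mul_of_nonneg_left h hs.le
  have h3 : s * (s⁻¹ - 1) = 1 - s := by field_simp
  nlinarith

lemma phi_le_sq {s : ℝ} (hs : 0 < s) : s * Real.log s ≤ s * (s - 1) :=
  mul_le_mul_of_nonneg_left (Real.log_le_sub_one_of_pos hs) hs.le

lemma phi_mono {u v : ℝ} (hu : 1 ≤ u) (huv : u ≤ v) :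
    u * Real.log u ≤ v * Real.log v :=
  mul_le_mul huv (Real.log_le_log (lt_of_lt_of_le one_pos hu) huv)
    (Real.log_nonneg hu) (le_trans zero_le_one (hu.trans huv))

lemma phi_sub_aux {a b : ℝ} (hb : 0 ≤ b) (hba : b ≤ a) :
    (a + b) * Real.log (a + b) ≤
      a * Real.log a + b * Real.log b + (1 + Real.log 2) * (a + b) := by
  rcases hb.lt_or_eq with hb' | hb'
  · have ha : 0 < a := lt_of_lt_of_le hb' hba
    have hab : 0 < a + b := by linarith
    have h1 : Real.log (a + b) ≤ Real.log 2 + Real.log a := by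
      rw [← Real.log_mul two_ne_zero ha.ne']
      exact Real.log_le_log hab (by linarith)
    have h2 : (a + b) * Real.log (a + b) ≤ (a + b) * (Real.log 2 + Real.log a) :=
      mul_le_mul_of_nonneg_left h1 hab.le
    have h3 : b * Real.log a - b * Real.log b ≤ a := by
      have hd : Real.log (a / b) ≤ a / b - 1 :=
        Real.log_le_sub_one_of_pos (div_pos ha hb')
      rw [Real.log_div ha.ne' hb'.ne'] at hd
      have h5 := mul_le_mul_of_nonneg_left hd hb'.le
      calc b * Real.log a - b * Real.log b = b * (Real.log a - Real.log b) := by ring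
        _ ≤ b * (a / b - 1) := h5
        _ = a - b := by field_simp
        _ ≤ a := by linarith
    nlinarith [Real.log_nonneg (by norm_num : (1:ℝ) ≤ 2)]
  · subst hb'
    simp only [add_zero, zero_mul]
    nlinarith [Real.log_nonneg (by norm_num : (1:ℝ) ≤ 2), hba]

lemma phi_sub {a b : ℝ} (ha : 0 ≤ a) (hb : 0 ≤ b) :
    (a + b) * Real.log (a + b) ≤
      a * Real.log a + b * Real.log b + (1 + Real.log 2) * (a + b) := by
  rcases le_total b a with h | h
  · exact phi_sub_aux hb h
  · have h6 := phi_sub_aux ha h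
    rw [add_comm b a] at h6
    linarith

lemma phi_super {a b : ℝ} (ha : 0 ≤ a) (hb : 0 ≤ b) :
    a * Real.log a + b * Real.log b ≤ (a + b) * Real.log (a + b) := by
  have key : ∀ u v : ℝ, 0 ≤ u → 0 ≤ v → u * Real.log u ≤ u * Real.log (u + v) := by
    intro u v hu hv
    rcases hu.lt_or_eq with hu' | hu'
    · exact mul_le_mul_of_nonneg_left (Real.log_le_log hu' (by linarith)) hu
    · simp [← hu']
  have h1 := key a b ha hb
  have h2 := key b a hb ha
  rw [add_comm b a] at h2
  nlinarith

lemma phi_scale {c t : ℝ} (hc : 0 < c) (ht : 0 ≤ t) :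
    (c * t) * Real.log (c * t) = c * (t * Real.log t) + (c * Real.log c) * t := by
  rcases ht.lt_or_eq with ht' | ht'
  · rw [Real.log_mul hc.ne' ht'.ne']; ring
  · simp [← ht']

lemma Gamma_four : Real.Gamma 4 = 6 := by
  have h : ((4:ℝ)) = ((3:ℕ):ℝ) + 1 := by norm_num
  rw [h, Real.Gamma_nat_eq_factorial]; norm_num [Nat.factorial]

lemma Gamma_ub {s : ℝ} (hs : 0 < s) :
    Real.Gamma s ≤ (1 + 20 / s) * Real.exp (s * Real.log s) := by
  have hexp_pos := Real.exp_pos (s * Real.log s)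
  rcases le_or_gt 2 s with h2 | h2
  · set n := Nat.ceil s with hn
    have hsn : s ≤ n := Nat.le_ceil s
    have hn2 : (2:ℕ) ≤ n := by exact_mod_cast (by exact_mod_cast h2.trans hsn : (2:ℝ) ≤ (n:ℝ))
    have h1n : 1 ≤ n := by omega
    have hmono : Real.Gamma s ≤ Real.Gamma n :=
      Real.Gamma_strictMonoOn_Ici.monotoneOn (Set.mem_Ici.mpr h2)
        (Set.mem_Ici.mpr (by exact_mod_cast h2.trans hsn)) hsn
    have hucast : ((n-1:ℕ):ℝ) = (n:ℝ) - 1 := by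
      rw [Nat.cast_sub h1n]; norm_num
    have hfac : Real.Gamma n = ((n-1).factorial : ℝ) := by
      have hc : ((n:ℝ)) = ((n-1:ℕ):ℝ) + 1 := by rw [hucast]; ring
      rw [hc, Real.Gamma_nat_eq_factorial]
    have hu1 : (1:ℝ) ≤ ((n-1:ℕ):ℝ) := by
      rw [hucast]
      have : (2:ℝ) ≤ (n:ℝ) := by exact_mod_cast hn2
      linarith
    have hupos : (0:ℝ) < ((n-1:ℕ):ℝ) := lt_of_lt_of_le one_pos hu1
    have hus : ((n-1:ℕ):ℝ) ≤ s := by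
      have hcl := Nat.ceil_lt_add_one hs.le
      rw [hucast]
      have : (n:ℝ) < s + 1 := by exact_mod_cast hcl
      linarith
    have hfle : ((n-1).factorial : ℝ) ≤ ((n-1:ℕ):ℝ) ^ (n-1) := by
      exact_mod_cast Nat.factorial_le_pow (n-1)
    have hpow : ((n-1:ℕ):ℝ) ^ (n-1) = Real.exp (((n-1:ℕ):ℝ) * Real.log ((n-1:ℕ):ℝ)) := by
      have e1 : Real.exp (((n-1:ℕ):ℝ) * Real.log ((n-1:ℕ):ℝ))
          = (Real.exp (Real.log ((n-1:ℕ):ℝ))) ^ (n-1) := Real.exp_nat_mul _ _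
      rw [Real.exp_log hupos] at e1
      rw [e1]
    have hphi : ((n-1:ℕ):ℝ) * Real.log ((n-1:ℕ):ℝ) ≤ s * Real.log s := phi_mono hu1 hus
    calc Real.Gamma s ≤ Real.Gamma n := hmono
      _ = ((n-1).factorial : ℝ) := hfac
      _ ≤ ((n-1:ℕ):ℝ) ^ (n-1) := hfle
      _ = Real.exp (((n-1:ℕ):ℝ) * Real.log ((n-1:ℕ):ℝ)) := hpow
      _ ≤ Real.exp (s * Real.log s) := Real.exp_le_exp.mpr hphi
      _ ≤ (1 + 20 / s) * Real.exp (s * Real.log s) := by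
          have : (0:ℝ) < 20 / s := by positivity
          nlinarith
  · have hs1 : s + 1 ≠ 0 := by linarith
    have hrec : Real.Gamma (s+2) = (s+1) * (s * Real.Gamma s) := by
      have e1 : Real.Gamma (s+1) = s * Real.Gamma s := Real.Gamma_add_one hs.ne'
      have e2 : Real.Gamma (s+1+1) = (s+1) * Real.Gamma (s+1) := Real.Gamma_add_one hs1
      have e3 : s + 2 = s + 1 + 1 := by ring
      rw [e3, e2, e1]
    have hmono : Real.Gamma (s+2) ≤ Real.Gamma 4 := by
      apply Real.Gamma_strictMonoOn_Ici.monotoneOn (Set.mem_Ici.mpr (by linarith))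
        (Set.mem_Ici.mpr (by norm_num)) (by linarith)
    rw [Gamma_four] at hmono
    have hGs : Real.Gamma s ≤ 6 / s := by
      have hGpos := Real.Gamma_pos_of_pos hs
      rw [hrec] at hmono
      rw [div_eq_inv_mul, ← mul_le_mul_iff_of_pos_left hs]
      calc s * Real.Gamma s ≤ (s+1) * (s * Real.Gamma s) := by nlinarith [mul_pos hs hGpos]
        _ ≤ 6 := hmono
        _ = s * (s⁻¹ * 6) := by field_simp
    have hexp1 : Real.exp (-1) ≤ Real.exp (s * Real.log s) :=
      Real.exp_le_exp.mpr (by nlinarith [phi_ge_sub_one hs])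
    have hexp2 : (3:ℝ)/10 ≤ Real.exp (-1) := by
      have h9 := Real.exp_one_lt_d9
      have hinv : Real.exp (-1) = (Real.exp 1)⁻¹ := by
        rw [← Real.exp_neg]
      rw [hinv]
      rw [le_inv_comm₀ (by norm_num) (Real.exp_pos 1)]
      nlinarith
    have h3 : (3:ℝ)/10 ≤ Real.exp (s * Real.log s) := le_trans hexp2 hexp1
    have h6 : (6:ℝ) ≤ 20 * Real.exp (s * Real.log s) := by nlinarith
    have h7 : 6 / s ≤ 20 * Real.exp (s * Real.log s) / s := by gcongr
    calc Real.Gamma s ≤ 6 / s := hGs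
      _ ≤ 20 * Real.exp (s * Real.log s) / s := h7
      _ = (20 / s) * Real.exp (s * Real.log s) := by ring
      _ ≤ (1 + 20 / s) * Real.exp (s * Real.log s) := by nlinarith

lemma exp_five_ge : (60:ℝ) ≤ Real.exp 5 := by
  have h9 := Real.exp_one_gt_d9
  have h5 : Real.exp 5 = (Real.exp 1) ^ (5:ℕ) := by
    rw [← Real.exp_nat_mul]; norm_num
  rw [h5]
  have hp : (2.7182818283:ℝ)^(5:ℕ) ≤ (Real.exp 1)^(5:ℕ) :=
    pow_le_pow_left₀ (by norm_num) h9.le 5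
  nlinarith [hp]

lemma Gamma_lb {s : ℝ} (hs : 0 < s) :
    Real.exp (s * Real.log s - 3 * s - 5) ≤ Real.Gamma s := by
  rcases lt_or_ge s 3 with h3 | h3
  · -- small s
    have hGpos := Real.Gamma_pos_of_pos hs
    have hrec : Real.Gamma (s+4) = (s+3) * ((s+2) * ((s+1) * (s * Real.Gamma s))) := by
      have e1 : Real.Gamma (s+1) = s * Real.Gamma s := Real.Gamma_add_one hs.ne'
      have e2 : Real.Gamma (s+1+1) = (s+1) * Real.Gamma (s+1) :=
        Real.Gamma_add_one (by linarith)
      have e3 : Real.Gamma (s+1+1+1) = (s+2) * Real.Gamma (s+1+1) := by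
        have := Real.Gamma_add_one (s := s+1+1) (by linarith)
        rw [this]; ring_nf
      have e4 : Real.Gamma (s+1+1+1+1) = (s+3) * Real.Gamma (s+1+1+1) := by
        have := Real.Gamma_add_one (s := s+1+1+1) (by linarith)
        rw [this]; ring_nf
      have e5 : s + 4 = s+1+1+1+1 := by ring
      rw [e5, e4, e3, e2, e1]
    have hmono : Real.Gamma 4 ≤ Real.Gamma (s+4) :=
      Real.Gamma_strictMonoOn_Ici.monotoneOn (Set.mem_Ici.mpr (by norm_num))
        (Set.mem_Ici.mpr (by linarith)) (by linarith)
    rw [Gamma_four, hrec] at hmono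
    have hP : (s+3) * ((s+2) * ((s+1) * s)) ≤ 360 := by
      calc (s+3) * ((s+2) * ((s+1) * s)) ≤ 6 * (5 * (4 * 3)) := by
            gcongr <;> nlinarith
        _ = 360 := by norm_num
    have hPpos : 0 < (s+3) * ((s+2) * ((s+1) * s)) := by positivity
    have hG60 : (1:ℝ)/60 ≤ Real.Gamma s := by
      nlinarith [mul_le_mul_of_nonneg_right hP hGpos.le]
    have hexp : Real.exp (s * Real.log s - 3 * s - 5) ≤ 1/60 := by
      have h1 : s * Real.log s - 3 * s - 5 ≤ -5 := by nlinarith [phi_le_sq hs]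
      have h2 : Real.exp (s * Real.log s - 3 * s - 5) ≤ Real.exp (-5) :=
        Real.exp_le_exp.mpr h1
      have h3 : Real.exp (-5:ℝ) ≤ 1/60 := by
        rw [Real.exp_neg]
        rw [inv_le_comm₀ (Real.exp_pos 5) (by norm_num)]
        calc (1/60:ℝ)⁻¹ = 60 := by norm_num
          _ ≤ Real.exp 5 := exp_five_ge
      linarith
    linarith
  · -- s ≥ 3
    set n := Nat.floor s with hn
    have hns : (n:ℝ) ≤ s := Nat.floor_le hs.le
    have hn3 : (3:ℕ) ≤ n := Nat.le_floor (by exact_mod_cast h3)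
    have h1n : 1 ≤ n := by omega
    have hsn1 : s < (n:ℝ) + 1 := Nat.lt_floor_add_one s
    have hucast : ((n-1:ℕ):ℝ) = (n:ℝ) - 1 := by rw [Nat.cast_sub h1n]; norm_num
    have hu1 : (1:ℝ) ≤ ((n-1:ℕ):ℝ) := by
      rw [hucast]
      have : (3:ℝ) ≤ (n:ℝ) := by exact_mod_cast hn3
      linarith
    have hupos : (0:ℝ) < ((n-1:ℕ):ℝ) := lt_of_lt_of_le one_pos hu1
    have hmono : Real.Gamma n ≤ Real.Gamma s := by
      apply Real.Gamma_strictMonoOn_Ici.monotoneOn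
        (Set.mem_Ici.mpr ?_) (Set.mem_Ici.mpr (by linarith)) hns
      have : (3:ℝ) ≤ (n:ℝ) := by exact_mod_cast hn3
      linarith
    have hfac : Real.Gamma n = ((n-1).factorial : ℝ) := by
      have hc : ((n:ℝ)) = ((n-1:ℕ):ℝ) + 1 := by rw [hucast]; ring
      rw [hc, Real.Gamma_nat_eq_factorial]
    have hfacge : Real.exp (((n-1:ℕ):ℝ) * Real.log ((n-1:ℕ):ℝ) - ((n-1:ℕ):ℝ))
        ≤ ((n-1).factorial : ℝ) := by
      have hp := Real.pow_div_factorial_le_exp ((n-1:ℕ):ℝ) hupos.le (n-1)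
      have hpow : ((n-1:ℕ):ℝ) ^ (n-1)
          = Real.exp (((n-1:ℕ):ℝ) * Real.log ((n-1:ℕ):ℝ)) := by
        have e1 : Real.exp (((n-1:ℕ):ℝ) * Real.log ((n-1:ℕ):ℝ))
            = (Real.exp (Real.log ((n-1:ℕ):ℝ))) ^ (n-1) := Real.exp_nat_mul _ _
        rw [Real.exp_log hupos] at e1
        rw [e1]
      have hfpos : (0:ℝ) < ((n-1).factorial : ℝ) := by exact_mod_cast (n-1).factorial_pos
      rw [div_le_iff₀ hfpos] at hp
      rw [Real.exp_sub, ← hpow, div_le_iff₀ (Real.exp_pos _)]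
      linarith [hp]
    -- exponent comparison
    have hkey : s * Real.log s - 3 * s - 5
        ≤ ((n-1:ℕ):ℝ) * Real.log ((n-1:ℕ):ℝ) - ((n-1:ℕ):ℝ) := by
      have hs2 : (1:ℝ) ≤ s - 2 := by linarith
      have hs2pos : (0:ℝ) < s - 2 := by linarith
      have hle : s - 2 ≤ ((n-1:ℕ):ℝ) := by rw [hucast]; linarith
      have hm : (s-2) * Real.log (s-2) ≤ ((n-1:ℕ):ℝ) * Real.log ((n-1:ℕ):ℝ) :=
        phi_mono hs2 hle
      have hlog : Real.log s - Real.log (s-2) ≤ 2 / (s-2) := by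
        have hd : Real.log (s / (s-2)) ≤ s / (s-2) - 1 :=
          Real.log_le_sub_one_of_pos (by positivity)
        rw [Real.log_div (by linarith) hs2pos.ne'] at hd
        have he : s / (s-2) - 1 = 2 / (s-2) := by field_simp; ring
        rw [he] at hd
        linarith
      have hkey2 : s * Real.log s - (s-2) * Real.log (s-2) ≤ 2 * Real.log s + 2 := by
        have h1 : (s-2) * (Real.log s - Real.log (s-2)) ≤ (s-2) * (2/(s-2)) :=
          mul_le_mul_of_nonneg_left hlog hs2pos.le
        have h2 : (s-2) * (2/(s-2)) = 2 := by field_simp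
        nlinarith
      have hlogs : Real.log s ≤ s - 1 := Real.log_le_sub_one_of_pos hs
      have hun : ((n-1:ℕ):ℝ) ≤ s - 1 := by rw [hucast]; linarith
      nlinarith
    calc Real.exp (s * Real.log s - 3 * s - 5)
        ≤ Real.exp (((n-1:ℕ):ℝ) * Real.log ((n-1:ℕ):ℝ) - ((n-1:ℕ):ℝ)) :=
          Real.exp_le_exp.mpr hkey
      _ ≤ ((n-1).factorial : ℝ) := hfacge
      _ = Real.Gamma n := hfac.symm
      _ ≤ Real.Gamma s := hmono

lemma factor_ub (a b d : ℝ) (ha : 0 < a) (hb : 0 < b) (hd : 0 < d) :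
    ∃ c p q : ℝ, ∀ u v : ℝ, 0 ≤ u → 0 ≤ v →
      Real.Gamma (a*u + b*v + d) ≤
        Real.exp (c + p*u + q*v + a*(u*Real.log u) + b*(v*Real.log v)) := by
  refine ⟨Real.log (1 + 20/d) + d*Real.log d + (1+Real.log 2)*d,
    a*Real.log a + 2*(1+Real.log 2)*a, b*Real.log b + 2*(1+Real.log 2)*b, ?_⟩
  intro u v hu hv
  have hau : 0 ≤ a*u := by positivity
  have hbv : 0 ≤ b*v := by positivity
  have hApos : 0 < a*u + b*v + d := by nlinarith
  have hdA : d ≤ a*u + b*v + d := by nlinarith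
  have h1 := Gamma_ub hApos
  have h2 : 1 + 20/(a*u + b*v + d) ≤ 1 + 20/d := by gcongr
  have h3 : Real.Gamma (a*u + b*v + d)
      ≤ (1 + 20/d) * Real.exp ((a*u + b*v + d) * Real.log (a*u + b*v + d)) :=
    le_trans h1 (mul_le_mul_of_nonneg_right h2 (Real.exp_pos _).le)
  have h4 : (1 + 20/d) = Real.exp (Real.log (1 + 20/d)) :=
    (Real.exp_log (by positivity)).symm
  have step1 := phi_sub (by positivity : (0:ℝ) ≤ a*u + b*v) hd.le
  have step2 := phi_sub hau hbv
  have sca := phi_scale ha hu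
  have scb := phi_scale hb hv
  have htot : (a*u + b*v + d) * Real.log (a*u + b*v + d)
      ≤ d*Real.log d + (1+Real.log 2)*d
        + (a*Real.log a + 2*(1+Real.log 2)*a)*u + (b*Real.log b + 2*(1+Real.log 2)*b)*v
        + a*(u*Real.log u) + b*(v*Real.log v) := by nlinarith
  calc Real.Gamma (a*u + b*v + d)
      ≤ (1 + 20/d) * Real.exp ((a*u + b*v + d) * Real.log (a*u + b*v + d)) := h3
    _ = Real.exp (Real.log (1 + 20/d) + (a*u + b*v + d) * Real.log (a*u + b*v + d)) := by
        rw [Real.exp_add, ← h4]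
    _ ≤ _ := Real.exp_le_exp.mpr (by linarith)

lemma factor_lb (a b d : ℝ) (ha : 0 < a) (hb : 0 < b) (hd : 0 < d) :
    ∃ c p q : ℝ, ∀ u v : ℝ, 0 ≤ u → 0 ≤ v →
      Real.exp (c + p*u + q*v + a*(u*Real.log u) + b*(v*Real.log v)) ≤
        Real.Gamma (a*u + b*v + d) := by
  refine ⟨d*Real.log d - 3*d - 5, a*Real.log a - 3*a, b*Real.log b - 3*b, ?_⟩
  intro u v hu hv
  have hau : 0 ≤ a*u := by positivity
  have hbv : 0 ≤ b*v := by positivity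
  have hApos : 0 < a*u + b*v + d := by nlinarith
  have step1 := phi_super (by positivity : (0:ℝ) ≤ a*u + b*v) hd.le
  have step2 := phi_super hau hbv
  have sca := phi_scale ha hu
  have scb := phi_scale hb hv
  have h1 := Gamma_lb hApos
  refine le_trans (Real.exp_le_exp.mpr ?_) h1
  nlinarith

lemma factor_lb1 (a d : ℝ) (ha : 0 < a) (hd : 0 < d) :
    ∃ c p : ℝ, ∀ u : ℝ, 0 ≤ u →
      Real.exp (c + p*u + a*(u*Real.log u)) ≤ Real.Gamma (a*u + d) := by
  refine ⟨d*Real.log d - 3*d - 5, a*Real.log a - 3*a, ?_⟩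
  intro u hu
  have hau : 0 ≤ a*u := by positivity
  have hApos : 0 < a*u + d := by nlinarith
  have step1 := phi_super hau hd.le
  have sca := phi_scale ha hu
  have h1 := Gamma_lb hApos
  refine le_trans (Real.exp_le_exp.mpr ?_) h1
  nlinarith

lemma pow_norm_le (X : ℝ) (hX : 0 ≤ X) (m : ℕ) :
    X ^ m ≤ Real.exp (Real.log (1 + X) * m) := by
  have h1 : X ^ m ≤ (1 + X) ^ m := pow_le_pow_left₀ hX (by linarith) m
  have h2 : (1 + X) ^ m = Real.exp (Real.log (1+X) * m) := by
    rw [mul_comm, Real.exp_nat_mul, Real.exp_log (by linarith)]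
  linarith [h1, h2.ge]

lemma sum_aux (c K Δ : ℝ) (hΔ : 0 < Δ) :
    Summable (fun m : ℕ => Real.exp (c + K*(m:ℝ) - Δ*((m:ℝ)*Real.log (m:ℝ)))) := by
  apply summable_of_ratio_norm_eventually_le (r := 1/2) (by norm_num)
  rw [Filter.eventually_atTop]
  refine ⟨⌈Real.exp ((K + Real.log 2)/Δ)⌉₊, fun n hn => ?_⟩
  have hne : Real.exp ((K + Real.log 2)/Δ) ≤ (n:ℝ) := by
    calc Real.exp ((K + Real.log 2)/Δ) ≤ (⌈Real.exp ((K + Real.log 2)/Δ)⌉₊ : ℝ) :=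
          Nat.le_ceil _
      _ ≤ (n:ℝ) := by exact_mod_cast hn
  have hlog : (K + Real.log 2)/Δ ≤ Real.log ((n:ℝ)+1) := by
    calc (K + Real.log 2)/Δ = Real.log (Real.exp ((K + Real.log 2)/Δ)) :=
          (Real.log_exp _).symm
      _ ≤ Real.log ((n:ℝ)+1) := Real.log_le_log (Real.exp_pos _) (by linarith)
  have hK : K + Real.log 2 ≤ Δ * Real.log ((n:ℝ)+1) := by
    rw [div_le_iff₀ hΔ] at hlog
    linarith [hlog]
  have hmlog : (n:ℝ) * Real.log (n:ℝ) ≤ (n:ℝ) * Real.log ((n:ℝ)+1) := by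
    rcases Nat.eq_zero_or_pos n with h0 | h0
    · simp [h0]
    · have : (0:ℝ) < n := by exact_mod_cast h0
      exact mul_le_mul_of_nonneg_left (Real.log_le_log this (by linarith)) this.le
  have key : c + K*((n:ℝ)+1) - Δ*(((n:ℝ)+1)*Real.log ((n:ℝ)+1))
      ≤ c + K*(n:ℝ) - Δ*((n:ℝ)*Real.log (n:ℝ)) - Real.log 2 := by
    have e1 : Δ*(((n:ℝ)+1)*Real.log ((n:ℝ)+1))
        = Δ*((n:ℝ)*Real.log ((n:ℝ)+1)) + Δ*Real.log ((n:ℝ)+1) := by ring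
    have e2 : Δ*((n:ℝ)*Real.log (n:ℝ)) ≤ Δ*((n:ℝ)*Real.log ((n:ℝ)+1)) :=
      mul_le_mul_of_nonneg_left hmlog hΔ.le
    nlinarith
  have hhalf : ∀ t : ℝ, (1/2:ℝ) * Real.exp t = Real.exp (t - Real.log 2) := by
    intro t
    rw [Real.exp_sub, Real.exp_log (by norm_num : (0:ℝ) < 2)]
    ring
  rw [Real.norm_eq_abs, Real.norm_eq_abs, abs_of_pos (Real.exp_pos _),
    abs_of_pos (Real.exp_pos _), hhalf]
  apply Real.exp_le_exp.mpr
  push_cast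
  linarith [key]


set_option maxHeartbeats 2000000 in
/-- Summability (absolute convergence) of the triple series
defining the trivariate Mittag-Leffler type function with parameters
`(α₁,β₁,δ₁; α₂,γ₁,δ₂; α₃,β₂,δ₃; α₄,δ₄; α₅,δ₅; β₃,δ₆; γ₂,δ₇; γ₃,δ₈)` at any
`x, y, z ∈ ℂ`, provided `Δ₁ = α₃+α₄+α₅−α₁−α₂ > 0`, `Δ₂ = γ₂+γ₃−γ₁ > 0` and
`Δ₃ = β₂+β₃−β₁ > 0`.  The index is `(m, j, k) : ℕ × ℕ × ℕ`. -/
theorem trivariate_mittagLeffler_summable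
    (α₁ α₂ α₃ α₄ α₅ β₁ β₂ β₃ γ₁ γ₂ γ₃ δ₁ δ₂ δ₃ δ₄ δ₅ δ₆ δ₇ δ₈ : ℝ)
    (hα₁ : 0 < α₁) (hα₂ : 0 < α₂) (hα₃ : 0 < α₃) (hα₄ : 0 < α₄) (hα₅ : 0 < α₅)
    (hβ₁ : 0 < β₁) (hβ₂ : 0 < β₂) (hβ₃ : 0 < β₃)
    (hγ₁ : 0 < γ₁) (hγ₂ : 0 < γ₂) (hγ₃ : 0 < γ₃)
    (hδ₁ : 0 < δ₁) (hδ₂ : 0 < δ₂) (hδ₃ : 0 < δ₃) (hδ₄ : 0 < δ₄)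
    (hδ₅ : 0 < δ₅) (hδ₆ : 0 < δ₆) (hδ₇ : 0 < δ₇) (hδ₈ : 0 < δ₈)
    (hΔ₁ : 0 < α₃ + α₄ + α₅ - α₁ - α₂) (hΔ₂ : 0 < γ₂ + γ₃ - γ₁)
    (hΔ₃ : 0 < β₂ + β₃ - β₁)
    (x y z : ℂ) :
    Summable (fun mjk : ℕ × ℕ × ℕ =>
      ((Real.Gamma (α₁ * mjk.1 + β₁ * mjk.2.2 + δ₁) *
          Real.Gamma (α₂ * mjk.1 + γ₁ * mjk.2.1 + δ₂) : ℝ) : ℂ) *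
        x ^ mjk.1 * y ^ mjk.2.1 * z ^ mjk.2.2 /
        ((Real.Gamma (α₃ * mjk.1 + β₂ * mjk.2.2 + δ₃) *
          Real.Gamma (α₄ * mjk.1 + δ₄) * Real.Gamma (α₅ * mjk.1 + δ₅) *
          Real.Gamma (β₃ * mjk.2.2 + δ₆) * Real.Gamma (γ₂ * mjk.2.1 + δ₇) *
          Real.Gamma (γ₃ * mjk.2.1 + δ₈) : ℝ) : ℂ)) := by
  obtain ⟨cA, pA, qA, hA⟩ := factor_ub α₁ β₁ δ₁ hα₁ hβ₁ hδ₁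
  obtain ⟨cB, pB, qB, hB⟩ := factor_ub α₂ γ₁ δ₂ hα₂ hγ₁ hδ₂
  obtain ⟨cC, pC, qC, hC⟩ := factor_lb α₃ β₂ δ₃ hα₃ hβ₂ hδ₃
  obtain ⟨cD, pD, hD⟩ := factor_lb1 α₄ δ₄ hα₄ hδ₄
  obtain ⟨cE, pE, hE⟩ := factor_lb1 α₅ δ₅ hα₅ hδ₅
  obtain ⟨cF, pF, hF⟩ := factor_lb1 β₃ δ₆ hβ₃ hδ₆
  obtain ⟨cG, pG, hG⟩ := factor_lb1 γ₂ δ₇ hγ₂ hδ₇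
  obtain ⟨cH, pH, hH⟩ := factor_lb1 γ₃ δ₈ hγ₃ hδ₈
  set K₀ : ℝ := cA + cB - cC - cD - cE - cF - cG - cH with hK₀
  set K₁ : ℝ := pA + pB - pC - pD - pE + Real.log (1 + ‖x‖) with hK₁
  set K₂ : ℝ := qB - pG - pH + Real.log (1 + ‖y‖) with hK₂
  set K₃ : ℝ := qA - qC - pF + Real.log (1 + ‖z‖) with hK₃
  have hsum1 := sum_aux K₀ K₁ (α₃+α₄+α₅-α₁-α₂) hΔ₁
  have hsum2 := sum_aux 0 K₂ (γ₂+γ₃-γ₁) hΔ₂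
  have hsum3 := sum_aux 0 K₃ (β₂+β₃-β₁) hΔ₃
  have hsum23 := hsum2.mul_of_nonneg hsum3
    (fun _ => (Real.exp_pos _).le) (fun _ => (Real.exp_pos _).le)
  have hg := hsum1.mul_of_nonneg hsum23
    (fun _ => (Real.exp_pos _).le)
    (fun q => mul_nonneg (Real.exp_pos _).le (Real.exp_pos _).le)
  apply Summable.of_norm_bounded hg
  rintro ⟨m, j, k⟩
  dsimp only
  have hm : (0:ℝ) ≤ (m:ℝ) := Nat.cast_nonneg m
  have hj : (0:ℝ) ≤ (j:ℝ) := Nat.cast_nonneg j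
  have hk : (0:ℝ) ≤ (k:ℝ) := Nat.cast_nonneg k
  have hA1pos : 0 < α₁ * (m:ℝ) + β₁ * (k:ℝ) + δ₁ := by
    nlinarith [mul_nonneg hα₁.le hm, mul_nonneg hβ₁.le hk]
  have hA2pos : 0 < α₂ * (m:ℝ) + γ₁ * (j:ℝ) + δ₂ := by
    nlinarith [mul_nonneg hα₂.le hm, mul_nonneg hγ₁.le hj]
  have hG1 := Real.Gamma_pos_of_pos hA1pos
  have hG2 := Real.Gamma_pos_of_pos hA2pos
  have hG3 := Real.Gamma_pos_of_pos (show 0 < α₃ * (m:ℝ) + β₂ * (k:ℝ) + δ₃ by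
    nlinarith [mul_nonneg hα₃.le hm, mul_nonneg hβ₂.le hk])
  have hG4 := Real.Gamma_pos_of_pos (show 0 < α₄ * (m:ℝ) + δ₄ by
    nlinarith [mul_nonneg hα₄.le hm])
  have hG5 := Real.Gamma_pos_of_pos (show 0 < α₅ * (m:ℝ) + δ₅ by
    nlinarith [mul_nonneg hα₅.le hm])
  have hG6 := Real.Gamma_pos_of_pos (show 0 < β₃ * (k:ℝ) + δ₆ by
    nlinarith [mul_nonneg hβ₃.le hk])
  have hG7 := Real.Gamma_pos_of_pos (show 0 < γ₂ * (j:ℝ) + δ₇ by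
    nlinarith [mul_nonneg hγ₂.le hj])
  have hG8 := Real.Gamma_pos_of_pos (show 0 < γ₃ * (j:ℝ) + δ₈ by
    nlinarith [mul_nonneg hγ₃.le hj])
  have hnumpos : 0 < Real.Gamma (α₁ * (m:ℝ) + β₁ * (k:ℝ) + δ₁) *
      Real.Gamma (α₂ * (m:ℝ) + γ₁ * (j:ℝ) + δ₂) := mul_pos hG1 hG2
  have hdenpos : 0 < Real.Gamma (α₃ * (m:ℝ) + β₂ * (k:ℝ) + δ₃) *
      Real.Gamma (α₄ * (m:ℝ) + δ₄) * Real.Gamma (α₅ * (m:ℝ) + δ₅) *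
      Real.Gamma (β₃ * (k:ℝ) + δ₆) * Real.Gamma (γ₂ * (j:ℝ) + δ₇) *
      Real.Gamma (γ₃ * (j:ℝ) + δ₈) := by positivity
  have hnorm : ‖((Real.Gamma (α₁ * (m:ℝ) + β₁ * (k:ℝ) + δ₁) *
          Real.Gamma (α₂ * (m:ℝ) + γ₁ * (j:ℝ) + δ₂) : ℝ) : ℂ) *
        x ^ m * y ^ j * z ^ k /
        ((Real.Gamma (α₃ * (m:ℝ) + β₂ * (k:ℝ) + δ₃) *
          Real.Gamma (α₄ * (m:ℝ) + δ₄) * Real.Gamma (α₅ * (m:ℝ) + δ₅) *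
          Real.Gamma (β₃ * (k:ℝ) + δ₆) * Real.Gamma (γ₂ * (j:ℝ) + δ₇) *
          Real.Gamma (γ₃ * (j:ℝ) + δ₈) : ℝ) : ℂ)‖
      = (Real.Gamma (α₁ * (m:ℝ) + β₁ * (k:ℝ) + δ₁) *
          Real.Gamma (α₂ * (m:ℝ) + γ₁ * (j:ℝ) + δ₂)) *
        ‖x‖ ^ m * ‖y‖ ^ j * ‖z‖ ^ k /
        (Real.Gamma (α₃ * (m:ℝ) + β₂ * (k:ℝ) + δ₃) *
          Real.Gamma (α₄ * (m:ℝ) + δ₄) * Real.Gamma (α₅ * (m:ℝ) + δ₅) *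
          Real.Gamma (β₃ * (k:ℝ) + δ₆) * Real.Gamma (γ₂ * (j:ℝ) + δ₇) *
          Real.Gamma (γ₃ * (j:ℝ) + δ₈)) := by
    rw [norm_div, norm_mul, norm_mul, norm_mul, norm_pow, norm_pow, norm_pow,
      Complex.norm_real, Complex.norm_real, Real.norm_eq_abs, Real.norm_eq_abs,
      abs_of_pos hnumpos, abs_of_pos hdenpos]
  rw [hnorm]
  -- individual bounds
  have bA := hA (m:ℝ) (k:ℝ) hm hk
  have bB := hB (m:ℝ) (j:ℝ) hm hj
  have bC := hC (m:ℝ) (k:ℝ) hm hk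
  have bD := hD (m:ℝ) hm
  have bE := hE (m:ℝ) hm
  have bF := hF (k:ℝ) hk
  have bG := hG (j:ℝ) hj
  have bH := hH (j:ℝ) hj
  have bX := pow_norm_le ‖x‖ (norm_nonneg x) m
  have bY := pow_norm_le ‖y‖ (norm_nonneg y) j
  have bZ := pow_norm_le ‖z‖ (norm_nonneg z) k
  have t1 := mul_le_mul bA bB hG2.le (Real.exp_pos _).le
  have t2 := mul_le_mul t1 bX (pow_nonneg (norm_nonneg x) m) (by positivity)
  have t3 := mul_le_mul t2 bY (pow_nonneg (norm_nonneg y) j) (by positivity)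
  have t4 := mul_le_mul t3 bZ (pow_nonneg (norm_nonneg z) k) (by positivity)
  have d1 := mul_le_mul bC bD (Real.exp_pos _).le hG3.le
  have d2 := mul_le_mul d1 bE (Real.exp_pos _).le (by positivity)
  have d3 := mul_le_mul d2 bF (Real.exp_pos _).le (by positivity)
  have d4 := mul_le_mul d3 bG (Real.exp_pos _).le (by positivity)
  have d5 := mul_le_mul d4 bH (Real.exp_pos _).le (by positivity)
  have hdiv := div_le_div₀ (by positivity) t4 (by positivity) d5
  refine le_trans hdiv ?_
  simp only [← Real.exp_add, ← Real.exp_sub]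
  apply Real.exp_le_exp.mpr
  apply le_of_eq
  rw [hK₀, hK₁, hK₂, hK₃]
  ring
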